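/- arXiv:1910.00586 — 2 statements merged into one kernel-verified Lean document; each statement's English description precedes it below -/
import Mathlib

section
/- Let C = A + iB be a Hermitian circulant matrix of order n with real circulant matrices A, B, satisfying C C* = (d² + n − 1) I. Then A is symmetric, B is skew-symmetric, AB = 0, A² − B² = (d² + n − 1) I, and M := A + B is a real circulant matrix satisfying M Mᵀ = (d² + n − 1) I. -/
open Matrix Complex

theorem stmt17 (n : ℕ) [NeZero n] (hn : 2 ≤ n)
    (a b : ZMod n → ℝ) (A B : Matrix (ZMod n) (ZMod n) ℝ)
    (hA : ∀ j k, A j k = a (k - j)) (hB : ∀ j k, B j k = b (k - j))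
    (C : Matrix (ZMod n) (ZMod n) ℂ)
    (hC : C = A.map (fun x => (x : ℂ)) + Complex.I • B.map (fun x => (x : ℂ)))
    (d : ℝ) (hHerm : C.IsHermitian)
    (horth : C * C.conjTranspose = ((d ^ 2 + n - 1 : ℝ) : ℂ) • 1) :
    A.transpose = A ∧ B.transpose = -B ∧ A * B = 0 ∧
      A * A - B * B = (d ^ 2 + n - 1 : ℝ) • 1 ∧
      (A + B) * (A + B).transpose = (d ^ 2 + n - 1 : ℝ) • 1 := by
  have hCe : ∀ j k, C j k = (A j k : ℂ) + Complex.I * (B j k : ℂ) := by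
    intro j k
    simp [hC, Matrix.add_apply, Matrix.smul_apply, Matrix.map_apply]
  -- symmetry of A, skew-symmetry of B from Hermitian condition
  have hherm' : ∀ j k, star ((A k j : ℂ) + Complex.I * (B k j : ℂ))
      = (A j k : ℂ) + Complex.I * (B j k : ℂ) := by
    intro j k
    have h := congrFun (congrFun hHerm.eq j) k
    rw [Matrix.conjTranspose_apply, hCe, hCe] at h
    exact h
  have hAsym : ∀ j k, A k j = A j k := by
    intro j k
    have h := congrArg Complex.re (hherm' j k)
    simpa [Complex.star_def, Complex.add_re, Complex.mul_re] using h
  have hBskew : ∀ j k, B k j = -B j k := by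
    intro j k
    have h := congrArg Complex.im (hherm' j k)
    simp [Complex.star_def, Complex.add_im, Complex.mul_im] at h
    linarith
  have hAT : A.transpose = A := by
    ext j k; exact hAsym j k
  have hBT : B.transpose = -B := by
    ext j k
    simp [Matrix.transpose_apply, hBskew j k]
  -- circulant matrices commute
  have hcomm : A * B = B * A := by
    ext j k
    simp only [Matrix.mul_apply, hA, hB]
    refine Fintype.sum_equiv (Equiv.subLeft (j + k)) _ _ fun l => ?_
    have h1 : (j + k - l) - j = k - l := by ring
    have h2 : k - (j + k - l) = l - j := by ring
    rw [Equiv.subLeft_apply, h1, h2, mul_comm]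
  -- C * C = c • 1
  have hCC : C * C = ((d ^ 2 + n - 1 : ℝ) : ℂ) • 1 := by
    rwa [hHerm.eq] at horth
  have hEntry : ∀ j k, ((A * A - B * B) j k : ℂ) + Complex.I * ((A * B + B * A) j k : ℂ)
      = ((d ^ 2 + n - 1 : ℝ) : ℂ) * (if j = k then 1 else 0) := by
    intro j k
    have h := congrFun (congrFun hCC j) k
    rw [Matrix.mul_apply] at h
    simp only [hCe] at h
    have hterm : ∀ l, ((A j l : ℂ) + Complex.I * B j l) * ((A l k : ℂ) + Complex.I * B l k)
        = ((A j l * A l k - B j l * B l k : ℝ) : ℂ)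
          + Complex.I * ((A j l * B l k + B j l * A l k : ℝ) : ℂ) := by
      intro l
      push_cast
      ring_nf
      rw [Complex.I_sq]
      ring
    rw [Finset.sum_congr rfl fun l _ => hterm l] at h
    rw [Finset.sum_add_distrib, ← Finset.mul_sum] at h
    rw [Matrix.sub_apply, Matrix.add_apply, Matrix.mul_apply, Matrix.mul_apply,
      Matrix.mul_apply, Matrix.mul_apply]
    push_cast
    rw [← Finset.sum_sub_distrib] at *
    rw [← Finset.sum_add_distrib] at *
    convert h using 2 <;> push_cast <;> simp [Matrix.smul_apply, Matrix.one_apply]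
  have hsub : A * A - B * B = (d ^ 2 + n - 1 : ℝ) • 1 := by
    ext j k
    have h := congrArg Complex.re (hEntry j k)
    simp only [Complex.add_re, Complex.ofReal_re, Complex.mul_re, Complex.I_re,
      Complex.I_im, Complex.ofReal_im, Complex.mul_im] at h
    simp only [Matrix.smul_apply, Matrix.one_apply, smul_eq_mul]
    rcases eq_or_ne j k with rfl | hjk
    · simpa using h
    · simpa [hjk] using h
  have hanti : A * B + B * A = 0 := by
    ext j k
    have h := congrArg Complex.im (hEntry j k)
    simp only [Complex.add_im, Complex.ofReal_im, Complex.mul_im, Complex.I_re,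
      Complex.I_im, Complex.ofReal_re, Complex.mul_re] at h
    rcases eq_or_ne j k with rfl | hjk
    · simpa using h
    · simpa [hjk] using h
  have hAB : A * B = 0 := by
    have h2 : A * B + A * B = 0 := by
      nth_rewrite 2 [hcomm]
      exact hanti
    have h3 : (2 : ℝ) • (A * B) = 0 := by rw [two_smul]; exact h2
    simpa using (smul_eq_zero.mp h3).resolve_left (by norm_num)
  have hBA : B * A = 0 := by rw [← hcomm]; exact hAB
  refine ⟨hAT, hBT, hAB, hsub, ?_⟩
  rw [Matrix.transpose_add, hAT, hBT]
  have : (A + B) * (A + -B) = A * A - B * B := by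
    rw [add_mul, mul_add, mul_add, mul_neg, mul_neg, hAB, hBA]
    noncomm_ring
  rw [this, hsub]
end

section
/- Let C be an n×n circulant matrix over the ring ℤ/mℤ with diagonal entries d and all off-diagonal entries congruent to ±1 mod m, satisfying C Cᵀ = (d² + n − 1) I over ℤ/mℤ. If m is even, then n is even. -/
open Matrix

theorem stmt18 (n m : ℕ) [NeZero n] (hn : 2 ≤ n)
    (c : ZMod n → ZMod m) (d : ZMod m)
    (C : Matrix (ZMod n) (ZMod n) (ZMod m))
    (hC : ∀ j k, C j k = c (k - j))
    (hc0 : c 0 = d)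
    (hpm1 : ∀ j : ZMod n, j ≠ 0 → c j = 1 ∨ c j = -1)
    (horth : C * C.transpose = (d ^ 2 + (n : ZMod m) - 1) • 1)
    (hm : Even m) :
    Even n := by
  haveI : Fact (1 < n) := ⟨hn⟩
  have h2m : (2 : ℕ) ∣ m := hm.two_dvd
  let φ : ZMod m →+* ZMod 2 := ZMod.castHom h2m (ZMod 2)
  have hφ1 : ∀ j : ZMod n, j ≠ 0 → φ (c j) = 1 := by
    intro j hj
    rcases hpm1 j hj with h | h <;> rw [h] <;> simp <;> decide
  have hentry := congrFun (congrFun horth 0) 1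
  rw [Matrix.mul_apply] at hentry
  have hrhs : ((d ^ 2 + (n : ZMod m) - 1) • (1 : Matrix (ZMod n) (ZMod n) (ZMod m))) 0 1 = 0 := by
    rw [Matrix.smul_apply, Matrix.one_apply_ne (zero_ne_one), smul_zero]
  rw [hrhs] at hentry
  have key : ∑ j : ZMod n, φ (c j) * φ (c (j - 1)) = 0 := by
    have := congrArg φ hentry
    rw [map_sum, map_zero] at this
    convert this using 2 with j
    rw [Matrix.transpose_apply, hC 1 j, hC 0 j, _root_.map_mul, sub_zero]
  have hf0 : φ (c 0) * φ (c (0 - 1)) = φ d := by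
    rw [hc0, hφ1 (0 - 1) (by rw [zero_sub]; exact neg_ne_zero.mpr one_ne_zero), mul_one]
  have hf1 : φ (c 1) * φ (c (1 - 1)) = φ d := by
    rw [sub_self, hc0, hφ1 1 one_ne_zero, one_mul]
  have haux : ∑ j : ZMod n, (φ (c j) * φ (c (j - 1)) - 1) = 0 := by
    rw [← Finset.sum_subset (Finset.subset_univ ({0, 1} : Finset (ZMod n)))]
    · rw [Finset.sum_pair (zero_ne_one), hf0, hf1]
      generalize φ d = x
      revert x; decide
    · intro j _ hj
      simp only [Finset.mem_insert, Finset.mem_singleton, not_or] at hj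
      rw [hφ1 j hj.1, hφ1 (j - 1) (sub_ne_zero.mpr hj.2), mul_one, sub_self]
  have hn2 : (n : ZMod 2) = 0 := by
    have := key
    rw [show (∑ j : ZMod n, φ (c j) * φ (c (j - 1)))
        = (∑ j : ZMod n, (φ (c j) * φ (c (j - 1)) - 1)) + n by
      rw [Finset.sum_sub_distrib, Finset.sum_const, Finset.card_univ, ZMod.card,
        nsmul_eq_mul, mul_one, sub_add_cancel]] at this
    rwa [haux, zero_add] at this
  have : (2 : ℕ) ∣ n := (ZMod.natCast_eq_zero_iff n 2).mp hn2
  exact even_iff_two_dvd.mpr this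
end
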